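/- Let m, n be positive natural numbers and let Λ ∈ ℝ^{(m+n)×(m+n)} be a symmetric positive definite matrix whose smallest eigenvalue satisfies λ_min(Λ) ≥ γ² for some γ > 0. Write Λ as the vertical block stack of U ∈ ℝ^{m×(m+n)} (the first m rows of Λ) and X ∈ ℝ^{n×(m+n)} (the last n rows of Λ). Let Π ∈ ℝ^{(m+n)×(m+n)} be the matrix of the orthogonal projection of ℝ^{m+n} onto the kernel of X, and set M = U Π Uᵀ ∈ ℝ^{m×m}. Then M is symmetric positive semidefinite and its smallest eigenvalue satisfies λ_min(M) ≥ γ⁴. -/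

import Mathlib

noncomputable section

open Matrix

/-- Smallest eigenvalue of a (symmetric) real matrix, as the infimum of its real spectrum. -/
def eigMin {n : Type*} [Fintype n] [DecidableEq n] (A : Matrix n n ℝ) : ℝ :=
  sInf (spectrum ℝ A)

/-- Cauchy–Schwarz for real dot products. -/
lemma dotProduct_sq_le {ι : Type*} [Fintype ι] (v u : ι → ℝ) :
    (v ⬝ᵥ u) ^ 2 ≤ (v ⬝ᵥ v) * (u ⬝ᵥ u) := by
  simpa [dotProduct, sq] using
    Finset.sum_mul_sq_le_sq_mul_sq Finset.univ v u

lemma dotProduct_self_nonneg' {ι : Type*} [Fintype ι] (v : ι → ℝ) :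
    0 ≤ v ⬝ᵥ v :=
  Finset.sum_nonneg fun i _ => mul_self_nonneg _

lemma dot_mulVec_symm {ι κ : Type*} [Fintype ι] [Fintype κ] (B : Matrix κ ι ℝ)
    (a : κ → ℝ) (b : ι → ℝ) :
    a ⬝ᵥ B *ᵥ b = (Bᵀ *ᵥ a) ⬝ᵥ b := by
  rw [dotProduct_mulVec, Matrix.mulVec_transpose]

/-- If the quadratic form of a Hermitian matrix dominates `c‖v‖²`, then `c ≤ eigMin`. -/
lemma le_eigMin_of_quadForm {ι : Type*} [Fintype ι] [DecidableEq ι] [Nonempty ι]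
    {A : Matrix ι ι ℝ} (hA : A.IsHermitian) (c : ℝ)
    (h : ∀ v, c * (v ⬝ᵥ v) ≤ v ⬝ᵥ A *ᵥ v) : c ≤ eigMin A := by
  apply le_csInf ⟨_, hA.eigenvalues_mem_spectrum_real (Classical.arbitrary ι)⟩
  intro μ hμ
  rw [spectrum.mem_iff] at hμ
  have hdet : (algebraMap ℝ (Matrix ι ι ℝ) μ - A).det = 0 := by
    by_contra hd
    exact hμ ((Matrix.isUnit_iff_isUnit_det _).mpr (isUnit_iff_ne_zero.mpr hd))
  obtain ⟨v, hv0, hv⟩ := (Matrix.exists_mulVec_eq_zero_iff).mpr hdet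
  have hAv : A *ᵥ v = μ • v := by
    rw [sub_mulVec] at hv
    have h1 : algebraMap ℝ (Matrix ι ι ℝ) μ *ᵥ v = A *ᵥ v := sub_eq_zero.mp hv
    rw [← h1, Algebra.algebraMap_eq_smul_one, smul_mulVec, one_mulVec]
  have h1 := h v
  rw [hAv] at h1
  rw [dotProduct_smul, smul_eq_mul] at h1
  have hpos : 0 < v ⬝ᵥ v :=
    lt_of_le_of_ne (dotProduct_self_nonneg' v)
      (Ne.symm (fun h0 => hv0 (dotProduct_self_eq_zero.mp h0)))
  exact le_of_mul_le_mul_right (by linarith [h1]) hpos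

/-- Conversely, `c ≤ eigMin` implies the quadratic form bound. -/
lemma quadForm_of_le_eigMin {ι : Type*} [Fintype ι] [DecidableEq ι]
    {A : Matrix ι ι ℝ} (hA : A.IsHermitian) (c : ℝ)
    (h : c ≤ eigMin A) (v : ι → ℝ) : c * (v ⬝ᵥ v) ≤ v ⬝ᵥ A *ᵥ v := by
  have hB : (A - algebraMap ℝ (Matrix ι ι ℝ) c).IsHermitian := by
    rw [Matrix.IsHermitian] at hA ⊢
    rw [conjTranspose_sub, hA, Algebra.algebraMap_eq_smul_one, conjTranspose_smul,
      conjTranspose_one, star_trivial]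
  have hPSD : (A - algebraMap ℝ (Matrix ι ι ℝ) c).PosSemidef := by
    apply (Matrix.IsHermitian.posSemidef_iff_eigenvalues_nonneg hB).mpr
    intro i
    have hmem := hB.eigenvalues_mem_spectrum_real i
    rw [← spectrum.sub_singleton_eq] at hmem
    obtain ⟨μ, hμ, r, hr, hrr⟩ := hmem
    rw [Set.mem_singleton_iff] at hr
    have hcμ : c ≤ μ := le_trans h (csInf_le (Matrix.finite_real_spectrum (A := A)).bddBelow hμ)
    rw [← hrr, hr]
    show (0:ℝ) ≤ μ - c
    linarith
  have := hPSD.dotProduct_mulVec_nonneg v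
  rw [sub_mulVec, dotProduct_sub, Algebra.algebraMap_eq_smul_one, smul_mulVec,
    one_mulVec, star_trivial] at this
  rw [dotProduct_smul, smul_eq_mul] at this
  linarith

/-- Let `Λ` be symmetric positive definite with `λ_min(Λ) ≥ γ²`, written as the
vertical stack of `U` (first `m` rows) and `X` (last `n` rows), and let `Pr` be the orthogonal
projection onto the kernel of `X`.  Then `M = U Pr Uᵀ` is symmetric positive semidefinite with
`λ_min(M) ≥ γ⁴`. -/
theorem stmt1 (m n : ℕ) (hm : 0 < m) (hn : 0 < n)
    (Λ : Matrix (Fin m ⊕ Fin n) (Fin m ⊕ Fin n) ℝ)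
    (hΛ : Λ.PosDef) (γ : ℝ) (hγ : 0 < γ) (hmin : γ ^ 2 ≤ eigMin Λ)
    (U : Matrix (Fin m) (Fin m ⊕ Fin n) ℝ) (hU : U = Λ.submatrix Sum.inl id)
    (X : Matrix (Fin n) (Fin m ⊕ Fin n) ℝ) (hX : X = Λ.submatrix Sum.inr id)
    (Pr : Matrix (Fin m ⊕ Fin n) (Fin m ⊕ Fin n) ℝ)
    (hsym : Prᵀ = Pr)
    (hidem : Pr * Pr = Pr)
    (hrange_sub : X * Pr = 0)
    (hrange_sup : ∀ v : Fin m ⊕ Fin n → ℝ, X.mulVec v = 0 → Pr.mulVec v = v)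
    (M : Matrix (Fin m) (Fin m) ℝ) (hM : M = U * Pr * Uᵀ) :
    M.PosSemidef ∧ γ ^ 4 ≤ eigMin M := by
  classical
  have : Nonempty (Fin m) := ⟨⟨0, hm⟩⟩
  have hΛH : Λ.IsHermitian := hΛ.1
  have hΛsym : Λᵀ = Λ := by
    have := hΛH.eq
    rwa [conjTranspose_eq_transpose_of_trivial] at this
  -- quadratic form bound for Λ
  have hQ : ∀ z, γ ^ 2 * (z ⬝ᵥ z) ≤ z ⬝ᵥ Λ *ᵥ z := quadForm_of_le_eigMin hΛH _ hmin
  -- Λ is invertible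
  have hdet : IsUnit Λ.det := isUnit_iff_ne_zero.mpr (ne_of_gt hΛ.det_pos)
  have hinv : Λ * Λ⁻¹ = 1 := Matrix.mul_nonsing_inv Λ hdet
  have hinv' : Λ⁻¹ * Λ = 1 := Matrix.nonsing_inv_mul Λ hdet
  -- M-quadratic form equals ‖u‖² with u = Pr *ᵥ (Uᵀ *ᵥ w)
  have hMform : ∀ w : Fin m → ℝ,
      w ⬝ᵥ M *ᵥ w = (Pr *ᵥ (Uᵀ *ᵥ w)) ⬝ᵥ (Pr *ᵥ (Uᵀ *ᵥ w)) := by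
    intro w
    have e1 : w ⬝ᵥ M *ᵥ w = (Uᵀ *ᵥ w) ⬝ᵥ (Pr *ᵥ (Uᵀ *ᵥ w)) := by
      rw [hM, ← mulVec_mulVec, ← mulVec_mulVec, dot_mulVec_symm U w]
    have e2 : (Uᵀ *ᵥ w) ⬝ᵥ (Pr *ᵥ (Uᵀ *ᵥ w))
        = (Pr *ᵥ (Uᵀ *ᵥ w)) ⬝ᵥ (Pr *ᵥ (Uᵀ *ᵥ w)) := by
      conv_lhs => rw [← hidem, ← mulVec_mulVec]
      rw [dot_mulVec_symm Pr (Uᵀ *ᵥ w), hsym]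
    rw [e1, e2]
  -- the key quadratic form inequality for M
  have hkey : ∀ w : Fin m → ℝ, γ ^ 4 * (w ⬝ᵥ w) ≤ w ⬝ᵥ M *ᵥ w := by
    intro w
    set z : Fin m ⊕ Fin n → ℝ := Sum.elim w 0 with hz
    set v : Fin m ⊕ Fin n → ℝ := Λ⁻¹ *ᵥ z with hvdef
    set u : Fin m ⊕ Fin n → ℝ := Pr *ᵥ (Uᵀ *ᵥ w) with hu
    have hΛv : Λ *ᵥ v = z := by
      rw [hvdef, mulVec_mulVec, hinv, one_mulVec]
    -- Λ z = Uᵀ w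
    have h2 : Λ *ᵥ z = Uᵀ *ᵥ w := by
      funext i
      subst hU
      simp only [Matrix.mulVec, dotProduct, Fintype.sum_sum_type, hz,
        Sum.elim_inl, Sum.elim_inr, Pi.zero_apply, mul_zero, Finset.sum_const_zero, add_zero,
        Matrix.transpose_apply, Matrix.submatrix_apply, id_eq]
      refine Finset.sum_congr rfl fun a _ => ?_
      have hs : Λᵀ (Sum.inl a) i = Λ (Sum.inl a) i := congrFun (congrFun hΛsym (Sum.inl a)) i
      rw [← hs, Matrix.transpose_apply]
    -- X v = 0
    have h3 : X *ᵥ v = 0 := by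
      funext k
      have := congrFun hΛv (Sum.inr k)
      subst hX
      simpa [Matrix.mulVec, dotProduct, Matrix.submatrix_apply, hz] using this
    have h4 : Pr *ᵥ v = v := hrange_sup v h3
    -- v ⬝ᵥ u = w ⬝ᵥ w
    have hzz : z ⬝ᵥ z = w ⬝ᵥ w := by
      simp [hz, dotProduct, Fintype.sum_sum_type]
    have h5 : v ⬝ᵥ u = w ⬝ᵥ w := by
      rw [hu, dot_mulVec_symm, hsym, h4, ← h2, dot_mulVec_symm, hΛsym, hΛv, hzz]
    -- v ⬝ᵥ z = v ⬝ᵥ Λ v ≥ γ² (v⬝v)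
    have h6 : γ ^ 2 * (v ⬝ᵥ v) ≤ v ⬝ᵥ z := by
      have := hQ v
      rwa [hΛv] at this
    have hCS1 : (v ⬝ᵥ z) ^ 2 ≤ (v ⬝ᵥ v) * (z ⬝ᵥ z) := dotProduct_sq_le v z
    have hCS2 : (v ⬝ᵥ u) ^ 2 ≤ (v ⬝ᵥ v) * (u ⬝ᵥ u) := dotProduct_sq_le v u
    have hd : 0 ≤ v ⬝ᵥ v := dotProduct_self_nonneg' v
    have hb : 0 ≤ u ⬝ᵥ u := dotProduct_self_nonneg' u
    have ha : 0 ≤ w ⬝ᵥ w := dotProduct_self_nonneg' w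
    rw [hMform w, ← hu]
    -- γ⁴ d ≤ a
    have hda : γ ^ 4 * (v ⬝ᵥ v) ≤ w ⬝ᵥ w := by
      rcases eq_or_lt_of_le hd with hd0 | hdpos
      · rw [← hd0]
        simpa using ha
      · have hsq : (γ ^ 2 * (v ⬝ᵥ v)) ^ 2 ≤ (v ⬝ᵥ z) ^ 2 := by
          apply pow_le_pow_left₀ (by positivity) h6
        rw [hzz] at hCS1
        nlinarith [hsq, hCS1, hdpos]
    rcases eq_or_lt_of_le ha with ha0 | hapos
    · rw [← ha0]
      simpa using hb
    · rw [h5] at hCS2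
      have e1 : γ ^ 4 * (w ⬝ᵥ w) ^ 2 ≤ γ ^ 4 * ((v ⬝ᵥ v) * (u ⬝ᵥ u)) :=
        mul_le_mul_of_nonneg_left hCS2 (by positivity)
      have e2 : (γ ^ 4 * (v ⬝ᵥ v)) * (u ⬝ᵥ u) ≤ (w ⬝ᵥ w) * (u ⬝ᵥ u) :=
        mul_le_mul_of_nonneg_right hda hb
      nlinarith [e1, e2, hapos]
  -- M is symmetric
  have hMH : M.IsHermitian := by
    rw [Matrix.IsHermitian, conjTranspose_eq_transpose_of_trivial, hM,
      transpose_mul, transpose_mul, transpose_transpose, hsym, Matrix.mul_assoc]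
  refine ⟨Matrix.PosSemidef.of_dotProduct_mulVec_nonneg hMH fun x => ?_, ?_⟩
  · rw [star_trivial]
    calc (0:ℝ) ≤ γ ^ 4 * (x ⬝ᵥ x) :=
      mul_nonneg (by positivity) (dotProduct_self_nonneg' x)
    _ ≤ x ⬝ᵥ M *ᵥ x := hkey x
  · exact le_eigMin_of_quadForm hMH _ hkey
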